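/- Let Σ = (X, 𝒟, φ) be a robustly forward complete system. If there exists a bounded nonempty set A ⊆ X such that Σ possesses a non-coercive Lyapunov function with respect to A, then Σ is practically uniformly globally asymptotically stable. -/

import Mathlib

open scoped NNReal ENNReal
open Filter Topology Bornology

noncomputable section

/-- Functions of class 𝒦: continuous, strictly increasing, vanishing at zero. -/
def ClassK (γ : ℝ≥0 → ℝ≥0) : Prop :=
  Continuous γ ∧ StrictMono γ ∧ γ 0 = 0

/-- Functions of class 𝒦∞: class 𝒦 and unbounded. -/
def ClassKinf (γ : ℝ≥0 → ℝ≥0) : Prop :=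
  ClassK γ ∧ ∀ M : ℝ≥0, ∃ r : ℝ≥0, M < γ r

/-- Functions of class 𝒦ℒ. -/
def ClassKL (β : ℝ≥0 → ℝ≥0 → ℝ≥0) : Prop :=
  Continuous (fun p : ℝ≥0 × ℝ≥0 => β p.1 p.2) ∧
  (∀ t : ℝ≥0, ClassK fun r => β r t) ∧
  ∀ r : ℝ≥0, 0 < r →
    StrictAnti (fun t => β r t) ∧ Tendsto (fun t => β r t) atTop (𝓝 0)

/-- Distance of a point to a set, `‖x‖_A`. -/
def dA {X : Type*} [NormedAddCommGroup X] (A : Set X) (x : X) : ℝ≥0 :=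
  (Metric.infDist x A).toNNReal

/-- The open ε-neighborhood `B_ε(A)` of a set. -/
def ballSet {X : Type*} [NormedAddCommGroup X] (ε : ℝ≥0) (A : Set X) : Set X :=
  {x | dA A x < ε}

/-- A (time-invariant) control system with disturbances. -/
structure System (X : Type*) [NormedAddCommGroup X] [NormedSpace ℝ X]
    (W : Type*) [NormedAddCommGroup W] [NormedSpace ℝ W] where
  /-- the set of disturbance values -/
  D : Set W
  D_nonempty : D.Nonempty
  /-- the space of disturbances -/
  Dist : Set (ℝ≥0 → W)
  dist_mem : ∀ d ∈ Dist, ∀ t : ℝ≥0, d t ∈ D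
  /-- axiom of shift invariance -/
  shift_invariant : ∀ d ∈ Dist, ∀ τ : ℝ≥0, (fun t => d (t + τ)) ∈ Dist
  /-- axiom of concatenation -/
  concat_mem : ∀ d₁ ∈ Dist, ∀ d₂ ∈ Dist, ∀ t : ℝ≥0, 0 < t →
      (fun s => if s ≤ t then d₁ s else d₂ (s - t)) ∈ Dist
  /-- the transition map -/
  φ : ℝ≥0 → X → (ℝ≥0 → W) → X
  identity : ∀ (x : X), ∀ d ∈ Dist, φ 0 x d = x
  causality : ∀ (t : ℝ≥0) (x : X), ∀ d ∈ Dist, ∀ d' ∈ Dist,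
      (∀ s ≤ t, d s = d' s) → φ t x d = φ t x d'
  cont : ∀ (x : X), ∀ d ∈ Dist, Continuous fun t : ℝ≥0 => φ t x d
  cocycle : ∀ (t h : ℝ≥0) (x : X), ∀ d ∈ Dist,
      φ h (φ t x d) (fun s => d (t + s)) = φ (t + h) x d

namespace System

variable {X : Type*} [NormedAddCommGroup X] [NormedSpace ℝ X]
variable {W : Type*} [NormedAddCommGroup W] [NormedSpace ℝ W]
variable (S : System X W)

/-- Reachability set within time `T`. -/
def RT (T : ℝ≥0) (B : Set X) : Set X :=
  {y | ∃ t ≤ T, ∃ d ∈ S.Dist, ∃ x ∈ B, y = S.φ t x d}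

/-- Reachability set. -/
def R (B : Set X) : Set X :=
  {y | ∃ t : ℝ≥0, ∃ d ∈ S.Dist, ∃ x ∈ B, y = S.φ t x d}

/-- Robust forward completeness. -/
def RFC : Prop :=
  ∀ C : ℝ≥0, 0 < C → ∀ τ : ℝ≥0, 0 < τ →
    IsBounded (S.RT τ {x : X | ‖x‖₊ ≤ C})

/-- Invariance of a set. -/
def Invariant (A : Set X) : Prop := S.R A ⊆ A

/-- Robust invariance of a set. -/
def RobustlyInvariant (A : Set X) : Prop :=
  S.Invariant A ∧
  ∀ ε : ℝ≥0, 0 < ε → ∀ h : ℝ≥0, 0 < h → ∃ δ : ℝ≥0, 0 < δ ∧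
    ∀ t : ℝ≥0, t ≤ h → ∀ x : X, dA A x ≤ δ → ∀ d ∈ S.Dist, dA A (S.φ t x d) ≤ ε

/-- Lagrange stability of a set. -/
def LagrangeStable (A : Set X) : Prop :=
  ∃ σ : ℝ≥0 → ℝ≥0, ClassKinf σ ∧ ∃ c : ℝ≥0, 0 < c ∧
    ∀ (x : X), ∀ d ∈ S.Dist, ∀ t : ℝ≥0, dA A (S.φ t x d) ≤ σ (dA A x) + c

/-- Uniform (local) stability of a set. -/
def ULS (A : Set X) : Prop :=
  ∀ ε : ℝ≥0, 0 < ε → ∃ δ : ℝ≥0, 0 < δ ∧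
    ∀ x : X, dA A x ≤ δ → ∀ d ∈ S.Dist, ∀ t : ℝ≥0, dA A (S.φ t x d) ≤ ε

/-- Uniform global stability of a set. -/
def UGS (A : Set X) : Prop :=
  ∃ σ : ℝ≥0 → ℝ≥0, ClassKinf σ ∧
    ∀ (x : X), ∀ d ∈ S.Dist, ∀ t : ℝ≥0, dA A (S.φ t x d) ≤ σ (dA A x)

/-- Uniform global asymptotic stability of a set. -/
def UGAS (A : Set X) : Prop :=
  ∃ β : ℝ≥0 → ℝ≥0 → ℝ≥0, ClassKL β ∧
    ∀ (x : X), ∀ d ∈ S.Dist, ∀ t : ℝ≥0, dA A (S.φ t x d) ≤ β (dA A x) t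

/-- Practical uniform global asymptotic stability of a set. -/
def PUGASSet (A : Set X) : Prop :=
  ∃ β : ℝ≥0 → ℝ≥0 → ℝ≥0, ClassKL β ∧ ∃ c : ℝ≥0, 0 < c ∧
    ∀ (x : X), ∀ d ∈ S.Dist, ∀ t : ℝ≥0, dA A (S.φ t x d) ≤ β (dA A x) t + c

/-- Global weak attractivity of a set. -/
def GWA (A : Set X) : Prop :=
  ∀ (x : X), ∀ d ∈ S.Dist, ∀ ε : ℝ≥0, 0 < ε → ∃ t : ℝ≥0, dA A (S.φ t x d) ≤ ε

/-- Uniform global weak attractivity of a set. -/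
def UGWA (A : Set X) : Prop :=
  ∀ ε : ℝ≥0, 0 < ε → ∀ r : ℝ≥0, 0 < r → ∃ τ : ℝ≥0,
    ∀ x : X, dA A x ≤ r → ∀ d ∈ S.Dist, ∃ t ≤ τ, dA A (S.φ t x d) ≤ ε

/-- Uniform global attractivity of a set. -/
def UGATT (A : Set X) : Prop :=
  ∀ ε : ℝ≥0, 0 < ε → ∀ r : ℝ≥0, 0 < r → ∃ τ : ℝ≥0,
    ∀ x : X, dA A x ≤ r → ∀ d ∈ S.Dist, ∀ t : ℝ≥0, τ ≤ t → dA A (S.φ t x d) ≤ ε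

/-- Uniform ultimate boundedness of the system. -/
def UUB : Prop :=
  ∃ K : ℝ≥0, 0 < K ∧ ∀ r : ℝ≥0, 0 < r → ∃ T : ℝ≥0,
    ∀ x : X, ‖x‖₊ ≤ r → ∀ d ∈ S.Dist, ∀ t : ℝ≥0, T ≤ t → ‖S.φ t x d‖₊ ≤ K

/-- Global recurrence of a set. -/
def GloballyRecurrent (A : Set X) : Prop :=
  ∀ (x : X), ∀ d ∈ S.Dist, ∃ t : ℝ≥0, S.φ t x d ∈ A

/-- Uniform global recurrence of a set. -/
def UniformlyGloballyRecurrent (A : Set X) : Prop :=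
  ∀ R : ℝ≥0, 0 < R → ∃ τ : ℝ≥0,
    ∀ x : X, dA A x ≤ R → ∀ d ∈ S.Dist, ∃ t ≤ τ, S.φ t x d ∈ A

/-- The set `P₊(A) = ⋂_{ε>0} ℛ(B_ε(A))`. -/
def Pplus (A : Set X) : Set X := ⋂ (ε : ℝ≥0) (_ : 0 < ε), S.R (ballSet ε A)

/-- Non-coercive Lyapunov function w.r.t. a bounded set `A`. -/
def NonCoerciveLyapunov (A : Set X) (V : X → ℝ) : Prop :=
  Continuous V ∧ (∀ x : X, 0 ≤ V x) ∧ (∀ x ∈ A, V x = 0) ∧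
  (∃ ψ₂ : ℝ≥0 → ℝ≥0, ClassKinf ψ₂ ∧
    ∀ x ∉ A, 0 < V x ∧ V x ≤ (ψ₂ (dA A x) : ℝ)) ∧
  (∃ α : ℝ≥0 → ℝ≥0, ClassK α ∧ ∀ x ∉ A, ∀ d ∈ S.Dist,
    Filter.liminf (fun t : ℝ≥0 => (V (S.φ t x d) - V x) / (t : ℝ))
      (𝓝[>] (0 : ℝ≥0)) ≤ -(α (dA A x) : ℝ))

/-- The system is Lagrange stable if some bounded nonempty set is Lagrange stable. -/
def SystemLagrangeStable : Prop :=
  ∃ A : Set X, A.Nonempty ∧ IsBounded A ∧ S.LagrangeStable A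

/-- The system is pUGAS if some bounded nonempty set is pUGAS. -/
def SystemPUGAS : Prop :=
  ∃ A : Set X, A.Nonempty ∧ IsBounded A ∧ S.PUGASSet A

end System

section AuxLemmas

open Filter Topology MeasureTheory

lemma freq_of_liminf_le' {α : Type*} {l : Filter α} [l.NeBot] {F : α → ℝ} {L r : ℝ}
    (h : Filter.liminf F l ≤ L) (hL : L < 0) (hr : L < r) :
    ∃ᶠ x in l, F x < r := by
  by_contra hc
  have hev : ∀ᶠ x in l, r ≤ F x := by
    filter_upwards [not_frequently.mp hc] with x hx
    exact not_lt.mp hx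
  have hset : Filter.liminf F l = sSup {a | ∀ᶠ x in l, a ≤ F x} := rfl
  by_cases hb : BddAbove {a : ℝ | ∀ᶠ x in l, a ≤ F x}
  · have : r ≤ Filter.liminf F l := by rw [hset]; exact le_csSup hb hev
    linarith
  · have : Filter.liminf F l = 0 := by rw [hset]; exact Real.sSup_of_not_bddAbove hb
    linarith

lemma fence_lemma {g : ℝ≥0 → ℝ} (hg : Continuous g) {L : ℝ} (hL : 0 < L) {a t : ℝ≥0}
    (hat : a ≤ t)
    (hdini : ∀ u, a ≤ u → u < t →
      Filter.liminf (fun h : ℝ≥0 => (g (u + h) - g u) / (h : ℝ)) (𝓝[>] 0) ≤ -L) :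
    g t + L * ((t : ℝ) - (a : ℝ)) ≤ g a := by
  have key : ∀ ε : ℝ, 0 < ε → ε < L → g t ≤ g a + (-L + ε) * ((t:ℝ) - a) := by
    intro ε hε hεL
    set Sε : Set ℝ≥0 := {v | v ∈ Set.Icc a t ∧ g v ≤ g a + (-L + ε) * ((v:ℝ) - a)} with hSdef
    have haS : a ∈ Sε := ⟨⟨le_refl a, hat⟩, by simp⟩
    have hclosed : IsClosed Sε :=
      IsClosed.inter isClosed_Icc (isClosed_le hg (by continuity))
    have hbdd : BddAbove Sε := BddAbove.mono (fun v hv => hv.1.2) bddAbove_Iic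
    set s := sSup Sε with hs
    have hsS : s ∈ Sε := hclosed.csSup_mem ⟨a, haS⟩ hbdd
    have hst : s ≤ t := hsS.1.2
    have has : a ≤ s := hsS.1.1
    rcases eq_or_lt_of_le hst with he | hlt
    · rw [← he]; exact hsS.2
    · exfalso
      have hdin := hdini s has hlt
      have hfreq : ∃ᶠ h in 𝓝[>] (0:ℝ≥0), (g (s + h) - g s) / (h:ℝ) < -L + ε :=
        freq_of_liminf_le' hdin (by linarith) (by linarith)
      have hev : ∀ᶠ h in 𝓝[>] (0:ℝ≥0), h < t - s ∧ 0 < h := by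
        have h1 : ∀ᶠ h in 𝓝[>] (0:ℝ≥0), h < t - s := by
          apply eventually_nhdsWithin_of_eventually_nhds
          filter_upwards [Iio_mem_nhds (tsub_pos_of_lt hlt)] with h hh using hh
        filter_upwards [h1, eventually_mem_nhdsWithin] with h hh hp using ⟨hh, hp⟩
      obtain ⟨h, hslope, hlt', hpos⟩ := (hfreq.and_eventually hev).exists
      have hsh_le : s + h ≤ t := by
        have := add_lt_add_right hlt' s
        rw [add_tsub_cancel_of_le hst] at this
        exact this.le
      have hgs : g (s + h) < g s + (-L + ε) * (h:ℝ) := by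
        have hhne : ((h:ℝ)) > 0 := by exact_mod_cast hpos
        have := (div_lt_iff₀ hhne).mp hslope
        linarith
      have hmem : s + h ∈ Sε := by
        refine ⟨⟨le_trans has le_self_add, hsh_le⟩, ?_⟩
        have hcoe : ((s + h : ℝ≥0) : ℝ) = (s:ℝ) + (h:ℝ) := by push_cast; ring
        have hs2 := hsS.2
        rw [hcoe]
        nlinarith [hgs, hs2]
      have hle : s + h ≤ s := le_csSup hbdd hmem
      have : h = 0 := by
        simpa [add_le_iff_nonpos_right, le_zero_iff] using hle
      exact hpos.ne' this
  rcases eq_or_lt_of_le hat with rfl | hlt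
  · simp
  · have hta : (0:ℝ) < (t:ℝ) - (a:ℝ) := by
      have : (a:ℝ) < t := by exact_mod_cast hlt
      linarith
    by_contra hc
    push_neg at hc
    set D : ℝ := g t + L * ((t:ℝ) - a) - g a with hD
    have hDpos : 0 < D := by simp only [hD]; linarith
    set ε : ℝ := min (D / (2 * ((t:ℝ) - a))) (L / 2) with hε
    have hεpos : 0 < ε := lt_min (by positivity) (by linarith)
    have hεL : ε < L := lt_of_le_of_lt (min_le_right _ _) (by linarith)
    have hk := key ε hεpos hεL
    have h1 : ε ≤ D / (2 * ((t:ℝ) - a)) := min_le_left _ _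
    have h2 : ε * ((t:ℝ) - a) ≤ D / 2 := by
      have := mul_le_mul_of_nonneg_right h1 hta.le
      calc ε * ((t:ℝ) - a) ≤ D / (2 * ((t:ℝ) - a)) * ((t:ℝ) - a) := this
        _ = D / 2 := by field_simp
    nlinarith

lemma exists_majorant (b : ℝ≥0 → ℝ≥0) (hb : Monotone b) :
    ∃ σ : ℝ≥0 → ℝ≥0, Continuous σ ∧ StrictMono σ ∧ σ 0 = 0 ∧
      (∀ M : ℝ≥0, ∃ r : ℝ≥0, M < σ r) ∧ ∀ r : ℝ≥0, b r ≤ σ r + b 1 := by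
  classical
  set f : ℝ → ℝ := fun s => 1 + (b (Real.toNNReal (s + 2)) : ℝ) with hf
  have hfmono : Monotone f := by
    intro u v huv
    simp only [hf]
    have : Real.toNNReal (u + 2) ≤ Real.toNNReal (v + 2) := Real.toNNReal_mono (by linarith)
    exact add_le_add_right (by exact_mod_cast hb this) 1
  have hfint : ∀ u v : ℝ, IntervalIntegrable f volume u v := fun u v =>
    hfmono.intervalIntegrable
  have hf1 : ∀ s : ℝ, 1 ≤ f s := fun s => le_add_of_nonneg_right (b _).coe_nonneg
  set F : ℝ → ℝ := fun r => ∫ s in (0:ℝ)..r, f s with hF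
  have hFcont : Continuous F := intervalIntegral.continuous_primitive hfint 0
  have hFadd : ∀ u v : ℝ, F u + (∫ s in u..v, f s) = F v := fun u v =>
    intervalIntegral.integral_add_adjacent_intervals (hfint 0 u) (hfint u v)
  have hgrow : ∀ u v : ℝ, u ≤ v → F u + (v - u) ≤ F v := by
    intro u v huv
    have hle : (v - u) ≤ ∫ s in u..v, f s := by
      have h1 : (v - u) = ∫ _ in u..v, (1:ℝ) := by simp
      rw [h1]
      exact intervalIntegral.integral_mono_on huv intervalIntegrable_const (hfint u v)
        (fun s _ => hf1 s)
    linarith [hFadd u v]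
  have hFmono : StrictMonoOn F (Set.univ) := by
    intro u _ v _ huv
    have := hgrow u v huv.le
    linarith
  have hF0 : F 0 = 0 := by simp [hF]
  have hFnonneg : ∀ r : ℝ, 0 ≤ r → r ≤ F r := fun r hr => by
    have := hgrow 0 r hr; simp [hF0] at this ⊢; linarith
  have hmaj : ∀ r : ℝ, 1 ≤ r → (b (Real.toNNReal r) : ℝ) ≤ F r := by
    intro r hr
    have h1 : F (r-1) + (∫ s in (r-1)..r, f s) = F r := hFadd (r-1) r
    have h2 : (b (Real.toNNReal r) : ℝ) ≤ ∫ s in (r-1)..r, f s := by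
      have hc : (b (Real.toNNReal r) : ℝ) = ∫ _ in (r-1)..r, (b (Real.toNNReal r) : ℝ) := by
        simp
      rw [hc]
      apply intervalIntegral.integral_mono_on (by linarith) intervalIntegrable_const (hfint _ _)
      intro s hs
      have hmono : Real.toNNReal r ≤ Real.toNNReal (s + 2) := Real.toNNReal_mono (by
        rcases hs with ⟨h1', h2'⟩; linarith)
      have hbb := hb hmono
      simp only [hf]
      have : (b (Real.toNNReal r) : ℝ) ≤ (b (Real.toNNReal (s+2)) : ℝ) := by exact_mod_cast hbb
      linarith
    have h3 : 0 ≤ F (r-1) := by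
      have := hFnonneg (r-1) (by linarith); linarith
    linarith
  refine ⟨fun r => Real.toNNReal (F r), ?_, ?_, ?_, ?_, ?_⟩
  · exact continuous_real_toNNReal.comp (hFcont.comp NNReal.continuous_coe)
  · intro u v huv
    have h1 : F u < F v := hFmono trivial trivial (by exact_mod_cast huv)
    have h2 : 0 ≤ F u := le_trans u.coe_nonneg (hFnonneg u u.coe_nonneg)
    exact (Real.toNNReal_lt_toNNReal_iff (lt_of_le_of_lt h2 h1)).mpr h1
  · simp [hF0]
  · intro M
    refine ⟨M + 1, ?_⟩
    have h1 : ((M:ℝ) + 1) ≤ F ((M + 1 : ℝ≥0) : ℝ) := by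
      have := hFnonneg ((M+1:ℝ≥0):ℝ) (by positivity); push_cast at this ⊢; linarith
    have h2 : (M:ℝ) < F ((M+1:ℝ≥0):ℝ) := by linarith
    have := Real.toNNReal_lt_toNNReal_iff (lt_of_le_of_lt M.coe_nonneg h2) |>.mpr h2
    simpa using this
  · intro r
    rcases le_or_gt r 1 with h | h
    · exact le_add_left (hb h)
    · have h1 : (1:ℝ) ≤ (r:ℝ) := by exact_mod_cast h.le
      have h2 := hmaj r h1
      rw [Real.toNNReal_coe] at h2
      have h3 : b r ≤ Real.toNNReal (F r) := by
        have := Real.toNNReal_mono h2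
        simpa using this
      exact le_add_right h3

end AuxLemmas

/-- RFC plus a non-coercive Lyapunov function w.r.t. a bounded
nonempty set implies practical UGAS. -/
theorem stmt12 {X : Type*} [NormedAddCommGroup X] [NormedSpace ℝ X]
    {W : Type*} [NormedAddCommGroup W] [NormedSpace ℝ W] (S : System X W) (hRFC : S.RFC)
    (h : ∃ A : Set X, A.Nonempty ∧ IsBounded A ∧
      ∃ V : X → ℝ, S.NonCoerciveLyapunov A V) :
    S.SystemPUGAS := by
  classical
  obtain ⟨A, hAne, hAbdd, V, hVc, hV0, hVA, ⟨ψ₂, hψ, hVψ⟩, ⟨α, hα, hdec⟩⟩ := h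
  obtain ⟨a₀, ha₀⟩ := hAne
  -- norm bound for A
  obtain ⟨R0, hR0⟩ := isBounded_iff_forall_norm_le.mp hAbdd
  set Rn : ℝ≥0 := Real.toNNReal R0 with hRn
  -- basic facts about dA
  have hψmono : Monotone ψ₂ := hψ.1.2.1.monotone
  have hψcont : Continuous ψ₂ := hψ.1.1
  have hα1 : (0:ℝ≥0) < α 1 := by
    have := hα.2.1 (show (0:ℝ≥0) < 1 by norm_num)
    rwa [hα.2.2] at this
  have hα1ne : α 1 ≠ 0 := hα1.ne'
  have hdA_mem : ∀ x ∈ A, dA A x = 0 := by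
    intro x hx
    simp [dA, Metric.infDist_zero_of_mem hx]
  have hnotA : ∀ x : X, 1 ≤ dA A x → x ∉ A := by
    intro x h1 hx
    rw [hdA_mem x hx] at h1
    exact absurd h1 (by norm_num)
  have hVle : ∀ x : X, V x ≤ (ψ₂ (dA A x) : ℝ) := by
    intro x
    by_cases hx : x ∈ A
    · rw [hVA x hx]; exact (ψ₂ _).coe_nonneg
    · exact (hVψ x hx).2
  have hdA_le : ∀ x : X, dA A x ≤ ‖x‖₊ + ‖a₀‖₊ := by
    intro x
    have h1 : Metric.infDist x A ≤ dist x a₀ := Metric.infDist_le_dist_of_mem ha₀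
    have h2 : dist x a₀ ≤ ‖x‖ + ‖a₀‖ := by
      rw [dist_eq_norm]; exact norm_sub_le x a₀
    have h3 : Real.toNNReal (Metric.infDist x A) ≤ Real.toNNReal (‖x‖ + ‖a₀‖) :=
      Real.toNNReal_mono (le_trans h1 h2)
    calc dA A x ≤ Real.toNNReal (‖x‖ + ‖a₀‖) := h3
      _ ≤ Real.toNNReal ‖x‖ + Real.toNNReal ‖a₀‖ := Real.toNNReal_add_le
      _ = ‖x‖₊ + ‖a₀‖₊ := by rw [norm_toNNReal, norm_toNNReal]
  have hnorm_le : ∀ x : X, ‖x‖₊ ≤ dA A x + Rn + 1 := by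
    intro x
    have h0 : (0:ℝ) ≤ Metric.infDist x A := Metric.infDist_nonneg
    obtain ⟨a, haA, hax⟩ := (Metric.infDist_lt_iff ⟨a₀, ha₀⟩).mp
      (lt_add_of_pos_right (Metric.infDist x A) (zero_lt_one))
    have h1 : ‖x‖ ≤ dist x a + ‖a‖ := by
      rw [dist_eq_norm]
      calc ‖x‖ = ‖x - a + a‖ := by rw [sub_add_cancel]
        _ ≤ ‖x - a‖ + ‖a‖ := norm_add_le _ _
    have h2 : ‖x‖ ≤ Metric.infDist x A + R0 + 1 := by
      have := hR0 a haA
      linarith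
    have h3 : Real.toNNReal ‖x‖ ≤ Real.toNNReal (Metric.infDist x A + R0 + 1) :=
      Real.toNNReal_mono h2
    calc ‖x‖₊ = Real.toNNReal ‖x‖ := (norm_toNNReal).symm
      _ ≤ Real.toNNReal (Metric.infDist x A + R0 + 1) := h3
      _ ≤ Real.toNNReal (Metric.infDist x A + R0) + Real.toNNReal 1 := Real.toNNReal_add_le
      _ ≤ (Real.toNNReal (Metric.infDist x A) + Real.toNNReal R0) + Real.toNNReal 1 :=
          add_le_add_left Real.toNNReal_add_le _
      _ = dA A x + Rn + 1 := by rw [hRn]; simp [dA]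
  have hcontdA : ∀ (x : X), ∀ d ∈ S.Dist, Continuous fun u : ℝ≥0 => dA A (S.φ u x d) := by
    intro x d hd
    exact continuous_real_toNNReal.comp
      ((Metric.continuous_infDist_pt A).comp (S.cont x d hd))
  -- Dini derivative along a trajectory
  have dini_along : ∀ (x : X), ∀ d ∈ S.Dist, ∀ u : ℝ≥0, 1 ≤ dA A (S.φ u x d) →
      Filter.liminf (fun h : ℝ≥0 =>
          (V (S.φ (u + h) x d) - V (S.φ u x d)) / (h : ℝ)) (𝓝[>] 0) ≤ -(α 1 : ℝ) := by
    intro x d hd u h1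
    set y := S.φ u x d with hy
    set d' : ℝ≥0 → W := fun s => d (u + s) with hd'def
    have hd' : d' ∈ S.Dist := by
      have := S.shift_invariant d hd u
      convert this using 2 with s
      exact congrArg d (add_comm u s)
    have hynA : y ∉ A := hnotA y h1
    have hkey := hdec y hynA d' hd'
    have heq : (fun h : ℝ≥0 => (V (S.φ (u + h) x d) - V (S.φ u x d)) / (h : ℝ)) =
        (fun t : ℝ≥0 => (V (S.φ t y d') - V y) / (t : ℝ)) := by
      funext h
      rw [← S.cocycle u h x d hd]
    rw [heq]
    refine le_trans hkey ?_
    have : (α 1 : ℝ) ≤ (α (dA A y) : ℝ) := by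
      exact_mod_cast hα.2.1.monotone h1
    linarith
  -- fencing along trajectories
  have traj_fence : ∀ (x : X), ∀ d ∈ S.Dist, ∀ a t : ℝ≥0, a ≤ t →
      (∀ u, a ≤ u → u < t → 1 ≤ dA A (S.φ u x d)) →
      (α 1 : ℝ) * ((t:ℝ) - (a:ℝ)) ≤ (ψ₂ (dA A (S.φ a x d)) : ℝ) := by
    intro x d hd a t hat hmid
    set g : ℝ≥0 → ℝ := fun w => V (S.φ w x d) with hg
    have hgc : Continuous g := hVc.comp (S.cont x d hd)
    have hfence := fence_lemma hgc (by exact_mod_cast hα1) hat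
      (fun u hu1 hu2 => dini_along x d hd u (hmid u hu1 hu2))
    have h0 : 0 ≤ g t := hV0 _
    have hVa : g a ≤ (ψ₂ (dA A (S.φ a x d)) : ℝ) := hVle _
    linarith
  -- the dichotomy
  set τ₁ : ℝ≥0 := ψ₂ 2 / α 1 + 1 with hτ₁
  have dichotomy : ∀ (x : X), ∀ d ∈ S.Dist, ∀ t : ℝ≥0,
      (α 1 : ℝ) * (t:ℝ) ≤ (ψ₂ (dA A x) : ℝ) ∨
      ∃ s : ℝ≥0, s ≤ t ∧ dA A (S.φ s x d) ≤ 1 ∧ t - s ≤ τ₁ := by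
    intro x d hd t
    set U : Set ℝ≥0 := {u | u ≤ t ∧ dA A (S.φ u x d) ≤ 1} with hU
    by_cases hUne : U.Nonempty
    · right
      have hUclosed : IsClosed U := by
        apply IsClosed.inter isClosed_Iic
        exact isClosed_Iic.preimage (hcontdA x d hd)
      have hUbdd : BddAbove U := BddAbove.mono (fun v hv => hv.1) bddAbove_Iic
      set s := sSup U with hs
      have hsU : s ∈ U := hUclosed.csSup_mem hUne hUbdd
      refine ⟨s, hsU.1, hsU.2, ?_⟩
      by_contra hcon
      push_neg at hcon
      have hτ₁pos : (1:ℝ≥0) ≤ τ₁ := le_add_self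
      have hts_pos : (0:ℝ≥0) < t - s := lt_of_lt_of_le (lt_of_lt_of_le zero_lt_one hτ₁pos) hcon.le
      have hslt : s < t := by
        by_contra hst
        push_neg at hst
        rw [tsub_eq_zero_of_le hst] at hts_pos
        exact absurd hts_pos (lt_irrefl 0)
      have hgt : ∀ u, s < u → u ≤ t → 1 < dA A (S.φ u x d) := by
        intro u hsu hut
        by_contra hle
        push_neg at hle
        have : u ∈ U := ⟨hut, hle⟩
        exact absurd (le_csSup hUbdd this) (not_le.mpr hsu)
      -- pick s' slightly above s with dA(φ s') < 2
      have hopen : IsOpen {u : ℝ≥0 | dA A (S.φ u x d) < 2} :=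
        isOpen_Iio.preimage (hcontdA x d hd)
      have hsin : s ∈ {u : ℝ≥0 | dA A (S.φ u x d) < 2} := by
        have := hsU.2
        exact lt_of_le_of_lt this (by norm_num)
      obtain ⟨δ, hδpos, hball⟩ := Metric.isOpen_iff.mp hopen s hsin
      set η : ℝ≥0 := min (min 1 (t - s)) (Real.toNNReal (δ/2)) with hη
      have hηpos : 0 < η := by
        apply lt_min (lt_min zero_lt_one hts_pos)
        exact Real.toNNReal_pos.mpr (by linarith)
      have hη1 : η ≤ 1 := le_trans (min_le_left _ _) (min_le_left _ _)
      have hηts : η ≤ t - s := le_trans (min_le_left _ _) (min_le_right _ _)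
      have hηδ : (η : ℝ) < δ := by
        have h1 : η ≤ Real.toNNReal (δ/2) := min_le_right _ _
        have h2 : (η:ℝ) ≤ δ/2 := by
          calc (η:ℝ) ≤ (Real.toNNReal (δ/2) : ℝ) := by exact_mod_cast h1
            _ = δ/2 := Real.coe_toNNReal _ (by linarith)
        linarith
      set s' := s + η with hs'
      have hs'ball : s' ∈ Metric.ball s δ := by
        rw [Metric.mem_ball, NNReal.dist_eq]
        have : ((s':ℝ≥0):ℝ) - (s:ℝ) = (η:ℝ) := by rw [hs']; push_cast; ring
        rw [this, abs_of_nonneg (η.coe_nonneg)]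
        exact hηδ
      have hs'2 : dA A (S.φ s' x d) < 2 := hball hs'ball
      have hs't : s' ≤ t := by
        rw [hs']
        calc s + η ≤ s + (t - s) := add_le_add_right hηts s
          _ = t := add_tsub_cancel_of_le hslt.le
      have hss' : s < s' := lt_add_of_pos_right s hηpos
      have hfence := traj_fence x d hd s' t hs't
        (fun u hu1 hu2 => (hgt u (lt_of_lt_of_le hss' hu1) hu2.le).le)
      have hψ2 : (ψ₂ (dA A (S.φ s' x d)) : ℝ) ≤ (ψ₂ 2 : ℝ) := by
        exact_mod_cast hψmono hs'2.le
      -- contradiction via real arithmetic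
      have hcoe1 : ((t - s : ℝ≥0) : ℝ) = (t:ℝ) - (s:ℝ) := by
        rw [NNReal.coe_sub hslt.le]
      have hcoe2 : ((τ₁ : ℝ≥0) : ℝ) = (ψ₂ 2 : ℝ) / (α 1 : ℝ) + 1 := by
        rw [hτ₁]; push_cast [NNReal.coe_div]; ring
      have hcon' : (ψ₂ 2 : ℝ) / (α 1 : ℝ) + 1 < (t:ℝ) - (s:ℝ) := by
        have := (NNReal.coe_lt_coe).mpr hcon
        rw [hcoe1, hcoe2] at this
        exact this
      have hα1R : (0:ℝ) < (α 1 : ℝ) := by exact_mod_cast hα1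
      have hfence2 : (t:ℝ) - (s':ℝ) ≤ (ψ₂ 2 : ℝ) / (α 1 : ℝ) := by
        rw [le_div_iff₀ hα1R]
        calc ((t:ℝ) - (s':ℝ)) * (α 1 : ℝ) = (α 1 : ℝ) * ((t:ℝ) - (s':ℝ)) := by ring
          _ ≤ (ψ₂ (dA A (S.φ s' x d)) : ℝ) := hfence
          _ ≤ (ψ₂ 2 : ℝ) := hψ2
      have hs'coe : (s' : ℝ) = (s:ℝ) + (η:ℝ) := by rw [hs']; push_cast; ring
      have hη1R : (η:ℝ) ≤ 1 := by exact_mod_cast hη1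
      linarith
    · left
      have hall : ∀ u, u ≤ t → 1 ≤ dA A (S.φ u x d) := by
        intro u hut
        by_contra hle
        push_neg at hle
        exact hUne ⟨u, hut, hle.le⟩
      have hfence := traj_fence x d hd 0 t zero_le
        (fun u hu1 hu2 => hall u hu2.le)
      rw [S.identity x d hd] at hfence
      simpa using hfence
  -- reachability bound function
  set Tf : ℝ≥0 → ℝ≥0 := fun r => ψ₂ r / α 1 with hTf
  set bset : ℝ≥0 → Set X := fun r => S.RT (Tf r + 1) {z : X | ‖z‖₊ ≤ r + Rn + 2} with hbset
  have hbsetbdd : ∀ r, IsBounded (bset r) := by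
    intro r
    apply hRFC (r + Rn + 2) (by positivity) (Tf r + 1) (by positivity)
  have hbset_ne : ∀ r : ℝ≥0, {ρ : ℝ≥0 | ∀ y ∈ bset r, ‖y‖₊ ≤ ρ}.Nonempty := by
    intro r
    obtain ⟨C, hC⟩ := isBounded_iff_forall_norm_le.mp (hbsetbdd r)
    refine ⟨Real.toNNReal C, fun y hy => ?_⟩
    rw [← norm_toNNReal]
    exact Real.toNNReal_mono (hC y hy)
  set bb : ℝ≥0 → ℝ≥0 := fun r => sInf {ρ : ℝ≥0 | ∀ y ∈ bset r, ‖y‖₊ ≤ ρ} with hbb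
  have hbb1 : ∀ r, ∀ y ∈ bset r, ‖y‖₊ ≤ bb r := by
    intro r y hy
    exact le_csInf (hbset_ne r) (fun ρ hρ => hρ y hy)
  have hbset_mono : ∀ r₁ r₂ : ℝ≥0, r₁ ≤ r₂ → bset r₁ ⊆ bset r₂ := by
    intro r₁ r₂ h12 y hy
    obtain ⟨t, ht, d, hd, x, hx, rfl⟩ := hy
    refine ⟨t, le_trans ht ?_, d, hd, x, ?_, rfl⟩
    · have : ψ₂ r₁ / α 1 ≤ ψ₂ r₂ / α 1 := by
        rw [div_eq_mul_inv, div_eq_mul_inv]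
        exact mul_le_mul_left (hψmono h12) _
      exact add_le_add_left this 1
    · exact le_trans hx (by
        have : r₁ + Rn + 2 ≤ r₂ + Rn + 2 := by
          exact add_le_add_left (add_le_add_left h12 Rn) 2
        exact this)
  have hbbmono : Monotone bb := by
    intro r₁ r₂ h12
    apply csInf_le_csInf (OrderBot.bddBelow _) (hbset_ne r₂)
    intro ρ hρ
    exact fun y hy => hρ y (hbset_mono r₁ r₂ h12 hy)
  -- the K set bound
  set Kset : Set X := S.RT τ₁ {z : X | ‖z‖₊ ≤ Rn + 2} with hKset
  have hKbdd : IsBounded Kset := hRFC (Rn + 2) (by positivity) τ₁ (by positivity)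
  obtain ⟨CK, hCK⟩ := isBounded_iff_forall_norm_le.mp hKbdd
  set C₀ : ℝ≥0 := Real.toNNReal CK with hC₀
  have hC₀b : ∀ y ∈ Kset, ‖y‖₊ ≤ C₀ := by
    intro y hy
    rw [← norm_toNNReal]
    exact Real.toNNReal_mono (hCK y hy)
  -- main norm dichotomy
  have normdich : ∀ (x : X), ∀ d ∈ S.Dist, ∀ t : ℝ≥0,
      (t ≤ Tf (dA A x) ∧ ‖S.φ t x d‖₊ ≤ bb (dA A x)) ∨ ‖S.φ t x d‖₊ ≤ C₀ := by
    intro x d hd t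
    rcases dichotomy x d hd t with hcase | ⟨s, hst, hs1, hsτ⟩
    · left
      have htTf : t ≤ Tf (dA A x) := by
        rw [hTf]
        rw [le_div_iff₀ hα1]
        have : (α 1 : ℝ) * (t : ℝ) = ((t * α 1 : ℝ≥0) : ℝ) := by push_cast; ring
        rw [this] at hcase
        exact_mod_cast hcase
      refine ⟨htTf, hbb1 _ _ ?_⟩
      refine ⟨t, le_trans htTf le_self_add, d, hd, x, ?_, rfl⟩
      calc ‖x‖₊ ≤ dA A x + Rn + 1 := hnorm_le x
        _ ≤ dA A x + Rn + 2 := by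
            exact add_le_add_right (by norm_num) _
    · right
      apply hC₀b
      set x' := S.φ s x d with hx'
      set d' : ℝ≥0 → W := fun w => d (s + w) with hd'def
      have hd' : d' ∈ S.Dist := by
        have := S.shift_invariant d hd s
        convert this using 2 with w
        exact congrArg d (add_comm s w)
      have hcoc : S.φ (t - s) x' d' = S.φ t x d := by
        rw [hx', S.cocycle s (t - s) x d hd, add_tsub_cancel_of_le hst]
      rw [← hcoc]
      refine ⟨t - s, hsτ, d', hd', x', ?_, rfl⟩
      calc ‖x'‖₊ ≤ dA A x' + Rn + 1 := hnorm_le x'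
        _ ≤ 1 + Rn + 1 := by exact add_le_add_left (add_le_add_left hs1 Rn) 1
        _ = Rn + 2 := by ring
  -- construct the majorant and the KL function
  obtain ⟨σ, hσcont, hσmono, hσ0, hσunb, hσmaj⟩ := exists_majorant bb hbbmono
  set β : ℝ≥0 → ℝ≥0 → ℝ≥0 := fun r t => σ r * (1 + Tf r) * (1 + t)⁻¹ with hβ
  set c : ℝ≥0 := C₀ + ‖a₀‖₊ + bb 1 + 1 with hc
  have hTfmono : Monotone Tf := by
    intro r₁ r₂ h12
    rw [hTf]
    simp only [div_eq_mul_inv]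
    exact mul_le_mul_left (hψmono h12) _
  have hTfcont : Continuous Tf := by
    rw [hTf]
    simp only [div_eq_mul_inv]
    exact hψcont.mul continuous_const
  refine ⟨A, ⟨a₀, ha₀⟩, hAbdd, β, ⟨?_, ?_, ?_⟩, c, by positivity, ?_⟩
  · -- joint continuity
    apply Continuous.mul
    · apply Continuous.mul
      · exact hσcont.comp continuous_fst
      · exact (continuous_const.add (hTfcont.comp continuous_fst))
    · exact (continuous_const.add continuous_snd).inv₀ (fun p => by simp)
  · -- ClassK in r for each t
    intro t
    refine ⟨?_, ?_, ?_⟩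
    · apply Continuous.mul
      · exact (hσcont.mul (continuous_const.add hTfcont))
      · exact continuous_const
    · intro r₁ r₂ h12
      have hpos1 : (0:ℝ≥0) < 1 + Tf r₁ := by positivity
      have h1 : σ r₁ * (1 + Tf r₁) < σ r₂ * (1 + Tf r₁) :=
        mul_lt_mul_of_pos_right (hσmono h12) hpos1
      have h2 : σ r₂ * (1 + Tf r₁) ≤ σ r₂ * (1 + Tf r₂) :=
        mul_le_mul_right (add_le_add_right (hTfmono h12.le) 1) _
      have hinvpos : (0:ℝ≥0) < (1 + t)⁻¹ := by
        rw [pos_iff_ne_zero]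
        simp
      exact mul_lt_mul_of_pos_right (lt_of_lt_of_le h1 h2) hinvpos
    · simp [hβ, hσ0]
  · -- strict anti and tendsto in t
    intro r hr
    have hKpos : (0:ℝ≥0) < σ r * (1 + Tf r) := by
      apply mul_pos
      · rw [← hσ0]; exact hσmono hr
      · positivity
    constructor
    · intro t₁ t₂ h12
      simp only [hβ]
      apply mul_lt_mul_of_pos_left _ hKpos
      have h1 : (0:ℝ≥0) < 1 + t₁ := by positivity
      have h2 : (1:ℝ≥0) + t₁ < 1 + t₂ := by exact add_lt_add_right h12 1
      exact NNReal.inv_lt_inv (by positivity) h2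
    · have htend : Filter.Tendsto (fun t : ℝ≥0 => (1 + t)⁻¹) atTop (𝓝 0) := by
        rw [← NNReal.tendsto_coe]
        have hat : Filter.Tendsto (fun t : ℝ≥0 => ((1 + t : ℝ≥0) : ℝ)) atTop atTop := by
          apply tendsto_atTop_mono (f := fun t : ℝ≥0 => (t:ℝ))
          · intro t; push_cast; linarith
          · exact NNReal.tendsto_coe_atTop.2 tendsto_id
        simpa [Function.comp_def] using tendsto_inv_atTop_zero.comp hat
      have := htend.const_mul (σ r * (1 + Tf r))
      simpa [hβ] using this
  · -- main estimate
    intro x d hd t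
    rcases normdich x d hd t with ⟨htTf, hnb⟩ | hK
    · have h1 : dA A (S.φ t x d) ≤ bb (dA A x) + ‖a₀‖₊ :=
        le_trans (hdA_le _) (add_le_add_left hnb _)
      have h2 : bb (dA A x) ≤ σ (dA A x) + bb 1 := hσmaj _
      have h3 : σ (dA A x) ≤ β (dA A x) t := by
        have he : σ (dA A x) = σ (dA A x) * ((1 + t) * (1 + t)⁻¹) := by
          rw [mul_inv_cancel₀ (by simp : (1:ℝ≥0) + t ≠ 0), mul_one]
        rw [he, ← mul_assoc]
        apply mul_le_mul_left
        apply mul_le_mul_right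
        exact add_le_add_right htTf 1
      have h4 : bb 1 + ‖a₀‖₊ ≤ c := by
        rw [hc, ← NNReal.coe_le_coe]
        push_cast
        linarith [C₀.coe_nonneg]
      calc dA A (S.φ t x d) ≤ bb (dA A x) + ‖a₀‖₊ := h1
        _ ≤ (σ (dA A x) + bb 1) + ‖a₀‖₊ := add_le_add_left h2 _
        _ = σ (dA A x) + (bb 1 + ‖a₀‖₊) := by ring
        _ ≤ β (dA A x) t + c := add_le_add h3 h4
    · have h1 : dA A (S.φ t x d) ≤ C₀ + ‖a₀‖₊ :=
        le_trans (hdA_le _) (add_le_add_left hK _)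
      have h2 : C₀ + ‖a₀‖₊ ≤ c := by
        rw [hc, ← NNReal.coe_le_coe]
        push_cast
        linarith [(bb 1).coe_nonneg]
      exact le_trans (le_trans h1 h2) (le_add_left le_rfl)
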